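/- For a sequence σ of length n with values in ℕ, define inv(j) = {k : k < j and σ(k) > σ(j)}, and R = {j : ∃ k < j, |[k, j) ∩ inv(j)| > (j-k)/2}. Then ed(σ) ≤ 2|R|, where ed(σ) is the edit distance to monotonicity. -/

import Mathlib

/-- A sequence is non-decreasing on an index set `S`. -/
def MonoOn {n : ℕ} {α : Type*} [Preorder α] (σ : Fin n → α) (S : Finset (Fin n)) : Prop :=
  ∀ i ∈ S, ∀ j ∈ S, i ≤ j → σ i ≤ σ j

/-- Length of the longest non-decreasing subsequence. -/
noncomputable def lisLen {n : ℕ} {α : Type*} [Preorder α] (σ : Fin n → α) : ℕ :=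
  sSup {k | ∃ S : Finset (Fin n), S.card = k ∧ MonoOn σ S}

/-- Edit distance to monotonicity: minimum number of deletions leaving a
non-decreasing subsequence. -/
noncomputable def edDist {n : ℕ} {α : Type*} [Preorder α] (σ : Fin n → α) : ℕ :=
  sInf {k | ∃ S : Finset (Fin n), S.card = k ∧ MonoOn σ Sᶜ}

open Finset in
/-- Greedy construction of an injection into `R`, assigning to each element `i` of `s`
an element of `R` strictly to its right, using that each `i ∈ s` has an interval to its
right in which `R`-elements form a strict majority. -/
lemma exists_injOn_into {n : ℕ} (R : Finset (Fin n)) :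
    ∀ s : Finset (Fin n), (∀ i ∈ s, i ∉ R) →
      (∀ i ∈ s, ∃ j : Fin n, i < j ∧
        ((Finset.Ioo i j).filter (fun m => m ∉ R)).card <
        ((Finset.Ioo i j).filter (fun m => m ∈ R)).card) →
      ∃ g : Fin n → Fin n, Set.InjOn g ↑s ∧ ∀ i ∈ s, g i ∈ R ∧ i < g i := by
  classical
  intro s
  induction s using Finset.strongInduction with
  | _ s IH =>
    intro hsR hwit
    rcases s.eq_empty_or_nonempty with rfl | hne
    · exact ⟨id, by simp, by simp⟩
    · set i0 := s.min' hne with hi0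
      have hi0s : i0 ∈ s := s.min'_mem hne
      set s' := s.erase i0 with hs'
      have hss : s' ⊂ s := Finset.erase_ssubset hi0s
      obtain ⟨g, hginj, hgprop⟩ := IH s' hss (fun i hi => hsR i (Finset.mem_of_mem_erase hi))
        (fun i hi => hwit i (Finset.mem_of_mem_erase hi))
      obtain ⟨j0, hij0, hcard⟩ := hwit i0 hi0s
      set A := (Finset.Ioo i0 j0).filter (fun m => m ∉ R) with hA
      set B := (Finset.Ioo i0 j0).filter (fun m => m ∈ R) with hB
      set t := s'.filter (fun i => g i ∈ Finset.Ioo i0 j0) with ht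
      have htA : t ⊆ A := by
        intro i hi
        rw [ht, Finset.mem_filter] at hi
        obtain ⟨hi', hgi⟩ := hi
        rw [Finset.mem_Ioo] at hgi
        have his : i ∈ s := Finset.mem_of_mem_erase hi'
        have h1 : i0 < i := lt_of_le_of_ne (s.min'_le i his)
          (fun h => (Finset.ne_of_mem_erase hi') h.symm)
        have h2 : i < g i := (hgprop i hi').2
        rw [hA, Finset.mem_filter, Finset.mem_Ioo]
        exact ⟨⟨h1, lt_trans h2 hgi.2⟩, hsR i his⟩
      have hts' : (↑t : Set (Fin n)) ⊆ ↑s' := fun x hx =>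
        Finset.mem_coe.mpr (Finset.mem_of_mem_filter x (Finset.mem_coe.mp hx))
      have himg : (t.image g).card = t.card := Finset.card_image_of_injOn (hginj.mono hts')
      have hBnotsub : ¬ B ⊆ t.image g := by
        intro hsub
        have := Finset.card_le_card hsub
        have := Finset.card_le_card htA
        omega
      obtain ⟨r, hrB, hrimg⟩ := Finset.not_subset.mp hBnotsub
      have hrR : r ∈ R := (Finset.mem_filter.mp hrB).2
      have hrIoo : r ∈ Finset.Ioo i0 j0 := Finset.mem_of_mem_filter r hrB
      have hrnot : ∀ i ∈ s', g i ≠ r := by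
        intro i hi hgi
        apply hrimg
        rw [Finset.mem_image]
        refine ⟨i, ?_, hgi⟩
        rw [ht, Finset.mem_filter]
        exact ⟨hi, hgi ▸ hrIoo⟩
      refine ⟨Function.update g i0 r, ?_, ?_⟩
      · intro a ha b hb hab
        rw [Finset.mem_coe] at ha hb
        by_cases ha0 : a = i0 <;> by_cases hb0 : b = i0
        · rw [ha0, hb0]
        · exfalso
          have hb' : b ∈ s' := Finset.mem_erase.mpr ⟨hb0, hb⟩
          rw [ha0] at hab
          rw [Function.update_self, Function.update_of_ne hb0] at hab
          exact hrnot b hb' hab.symm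
        · exfalso
          have ha' : a ∈ s' := Finset.mem_erase.mpr ⟨ha0, ha⟩
          rw [hb0] at hab
          rw [Function.update_self, Function.update_of_ne ha0] at hab
          exact hrnot a ha' hab
        · have ha' : a ∈ s' := Finset.mem_erase.mpr ⟨ha0, ha⟩
          have hb' : b ∈ s' := Finset.mem_erase.mpr ⟨hb0, hb⟩
          rw [Function.update_of_ne ha0, Function.update_of_ne hb0] at hab
          exact hginj (Finset.mem_coe.mpr ha') (Finset.mem_coe.mpr hb') hab
      · intro i hi
        by_cases hi0' : i = i0
        · rw [hi0', Function.update_self]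
          rw [Finset.mem_Ioo] at hrIoo
          exact ⟨hrR, hrIoo.1⟩
        · rw [Function.update_of_ne hi0']
          exact hgprop i (Finset.mem_erase.mpr ⟨hi0', hi⟩)

theorem ed_le_two_R_card {n : ℕ} (σ : Fin n → ℕ) :
    edDist σ ≤
      2 * (Finset.univ.filter (fun j : Fin n => ∃ k : Fin n, k < j ∧
        (j : ℕ) - (k : ℕ) <
          2 * ((Finset.Ico k j).filter (fun i => σ j < σ i)).card)).card := by
  classical
  set R := (Finset.univ.filter (fun j : Fin n => ∃ k : Fin n, k < j ∧
        (j : ℕ) - (k : ℕ) <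
          2 * ((Finset.Ico k j).filter (fun i => σ j < σ i)).card)) with hR
  set T := (Finset.univ.filter (fun i : Fin n =>
    i ∉ R ∧ ∃ j : Fin n, j ∉ R ∧ i < j ∧ σ j < σ i)) with hT
  -- membership characterizations
  have hmemR : ∀ j : Fin n, j ∈ R ↔ ∃ k : Fin n, k < j ∧
      (j : ℕ) - (k : ℕ) < 2 * ((Finset.Ico k j).filter (fun i => σ j < σ i)).card := by
    intro j; rw [hR, Finset.mem_filter]; simp
  have hmemT : ∀ i : Fin n, i ∈ T ↔
      (i ∉ R ∧ ∃ j : Fin n, j ∉ R ∧ i < j ∧ σ j < σ i) := by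
    intro i; rw [hT, Finset.mem_filter]; simp
  -- Step 1: complement of R ∪ T is monotone
  have hmono : MonoOn σ (R ∪ T)ᶜ := by
    intro i hi j hj hij
    by_contra hlt
    push_neg at hlt
    have hij' : i < j := lt_of_le_of_ne hij (by rintro rfl; omega)
    rw [Finset.mem_compl, Finset.mem_union] at hi hj
    push_neg at hi hj
    exact hi.2 ((hmemT i).mpr ⟨hi.1, j, hj.1, hij', hlt⟩)
  -- Step 2: T.card ≤ R.card
  have hwitness : ∀ i ∈ T, ∃ j : Fin n, i < j ∧
      ((Finset.Ioo i j).filter (fun m => m ∉ R)).card <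
      ((Finset.Ioo i j).filter (fun m => m ∈ R)).card := by
      intro i hi
      obtain ⟨hiR, j1, hj1⟩ := (hmemT i).mp hi
      -- take minimal such j
      set W := (Finset.univ.filter (fun j : Fin n => j ∉ R ∧ i < j ∧ σ j < σ i)) with hW
      have hWne : W.Nonempty := ⟨j1, by rw [hW, Finset.mem_filter]; exact ⟨Finset.mem_univ _, hj1⟩⟩
      set j0 := W.min' hWne with hj0
      have hj0W : j0 ∈ W := W.min'_mem hWne
      rw [hW, Finset.mem_filter] at hj0W
      obtain ⟨-, hj0R, hij0, hσj0⟩ := hj0W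
      refine ⟨j0, hij0, ?_⟩
      set A := (Finset.Ioo i j0).filter (fun m => m ∉ R) with hA
      set B := (Finset.Ioo i j0).filter (fun m => m ∈ R) with hB
      -- A consists of inversions of j0
      have hAsub : A ⊆ (Finset.Ioo i j0).filter (fun m => σ j0 < σ m) := by
        intro m hm
        rw [hA, Finset.mem_filter] at hm
        obtain ⟨hmIoo, hmR⟩ := hm
        rw [Finset.mem_filter]
        refine ⟨hmIoo, ?_⟩
        by_contra hc
        push_neg at hc
        rw [Finset.mem_Ioo] at hmIoo
        have : m ∈ W := by
          rw [hW, Finset.mem_filter]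
          exact ⟨Finset.mem_univ _, hmR, hmIoo.1, lt_of_le_of_lt hc hσj0⟩
        exact absurd (W.min'_le m this) (not_le.mpr hmIoo.2)
      -- count of inversions in [i, j0)
      have hIco : Finset.Ico i j0 = insert i (Finset.Ioo i j0) :=
        (Finset.Ioo_insert_left hij0).symm
      have hinotIoo : i ∉ Finset.Ioo i j0 := by simp
      have hcnt : ((Finset.Ico i j0).filter (fun m => σ j0 < σ m)).card =
          ((Finset.Ioo i j0).filter (fun m => σ j0 < σ m)).card + 1 := by
        rw [hIco, Finset.filter_insert, if_pos hσj0,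
          Finset.card_insert_of_notMem (fun h => hinotIoo (Finset.mem_of_mem_filter i h))]
      -- j0 ∉ R gives the window bound for k = i
      have hwin : 2 * ((Finset.Ico i j0).filter (fun m => σ j0 < σ m)).card ≤
          (j0 : ℕ) - (i : ℕ) := by
        by_contra hc
        push_neg at hc
        exact hj0R ((hmemR j0).mpr ⟨i, hij0, hc⟩)
      have hpart : B.card + A.card = (Finset.Ioo i j0).card := by
        rw [hB, hA]
        exact Finset.card_filter_add_card_filter_not (fun m => m ∈ R)
      have hIoocard : (Finset.Ioo i j0).card = (j0 : ℕ) - (i : ℕ) - 1 := Fin.card_Ioo i j0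
      have hAle := Finset.card_le_card hAsub
      have hfle : ((Finset.Ioo i j0).filter (fun m => σ j0 < σ m)).card ≤
          (Finset.Ioo i j0).card := Finset.card_filter_le _ _
      have hd : (i : ℕ) < (j0 : ℕ) := hij0
      omega
  have hTR : T.card ≤ R.card := by
    obtain ⟨g, hginj, hgprop⟩ := exists_injOn_into R T
      (fun i hi => ((hmemT i).mp hi).1) hwitness
    calc T.card = (T.image g).card := (Finset.card_image_of_injOn hginj).symm
      _ ≤ R.card := Finset.card_le_card (by
          intro r hr
          rw [Finset.mem_image] at hr
          obtain ⟨i, hi, rfl⟩ := hr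
          exact (hgprop i hi).1)
  -- Step 3: conclude
  have hed : edDist σ ≤ (R ∪ T).card := Nat.sInf_le ⟨R ∪ T, rfl, hmono⟩
  calc edDist σ ≤ (R ∪ T).card := hed
    _ ≤ R.card + T.card := Finset.card_union_le R T
    _ ≤ 2 * R.card := by omega
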